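/- Let n ≥ 2, let W = Sym(n) with length function ℓ, simple roots α_1,…,α_{n−1}, and for w ∈ W let ν_i(w) = 1 if α_i ∈ w(Φ⁻) and 0 otherwise. Let X_1,…,X_{n−1}, X̃_0, X̃_n be formal variables (or elements of a field) and define Z = ( ∑_{w∈W} q^{−ℓ(w)} ∏_{i=1}^{n−1} X_i^{ν_i(w)} ) / ( ∏_{i=1}^{n−1}(1−X_i) · (1−X̃_0)(1−X̃_n) ). Then substituting q → q^{−1} and X_i → X_i^{−1} (for all i, including X̃_0 → X̃_0^{−1}, X̃_n → X̃_n^{−1}) yields Z → (−1)^{n−1}·q^{n(n−1)/2}·X̃_0·X̃_n·Z. -/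

import Mathlib

open Finset

/-- The length (number of inversions) of a permutation of `Fin n`, i.e. the Coxeter length
in the Weyl group `Sym(n)`. -/
def permLength (n : ℕ) (w : Equiv.Perm (Fin n)) : ℕ :=
  (Finset.univ.filter (fun p : Fin n × Fin n => p.1 < p.2 ∧ w p.2 < w p.1)).card

/-- `ν_i(w) = 1` if the simple root `α_i = e_i − e_{i+1}` (1-based `i`) lies in `w(Φ⁻)`,
equivalently `w⁻¹(i) > w⁻¹(i+1)`, and `ν_i(w) = 0` otherwise. -/
def nu (n : ℕ) (w : Equiv.Perm (Fin n)) (i : ℕ) : ℕ :=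
  if h : 1 ≤ i ∧ i + 1 ≤ n then
    (if w.symm ⟨i, by omega⟩ < w.symm ⟨i - 1, by omega⟩ then 1 else 0)
  else 0

/-- The Igusa-type Weyl-group sum
`Z = (∑_{w∈Sym(n)} q^{−ℓ(w)} ∏_{i=1}^{n−1} X_i^{ν_i(w)}) /
     (∏_{i=1}^{n−1}(1−X_i)·(1−X̃_0)(1−X̃_n))`
with values in a field `F`. -/
noncomputable def igusaZ (F : Type*) [Field F] (n : ℕ) (q : F) (X : ℕ → F) (X0 Xn : F) : F :=
  (∑ w : Equiv.Perm (Fin n), q⁻¹ ^ (permLength n w) * ∏ i ∈ Finset.Icc 1 (n - 1), (X i) ^ (nu n w i))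
    / ((∏ i ∈ Finset.Icc 1 (n - 1), (1 - X i)) * ((1 - X0) * (1 - Xn)))

lemma nu_le_one (n : ℕ) (w : Equiv.Perm (Fin n)) (i : ℕ) : nu n w i ≤ 1 := by
  unfold nu; split_ifs <;> simp

lemma permLength_mul_rev (n : ℕ) (w : Equiv.Perm (Fin n)) :
    permLength n (w * Fin.revPerm) + permLength n w = n * (n - 1) / 2 := by
  classical
  have hbij : permLength n (w * Fin.revPerm)
      = (univ.filter (fun p : Fin n × Fin n => p.1 < p.2 ∧ w p.1 < w p.2)).card := by
    unfold permLength
    apply Finset.card_nbij' (fun p : Fin n × Fin n => (p.2.rev, p.1.rev))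
      (fun p : Fin n × Fin n => (p.2.rev, p.1.rev))
    · intro p hp
      simp only [Finset.mem_coe, mem_filter, mem_univ, true_and, Equiv.Perm.mul_apply,
        Fin.revPerm_apply] at hp ⊢
      exact ⟨Fin.rev_lt_rev.mpr hp.1, hp.2⟩
    · intro p hp
      simp only [Finset.mem_coe, mem_filter, mem_univ, true_and, Equiv.Perm.mul_apply,
        Fin.revPerm_apply] at hp ⊢
      exact ⟨Fin.rev_lt_rev.mpr hp.1, by simpa [Fin.rev_rev] using hp.2⟩
    · intro p _; simp [Fin.rev_rev]
    · intro p _; simp [Fin.rev_rev]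
  have hsplit :
      (univ.filter (fun p : Fin n × Fin n => p.1 < p.2 ∧ w p.1 < w p.2)).card
        + permLength n w
      = (univ.filter (fun p : Fin n × Fin n => p.1 < p.2)).card := by
    unfold permLength
    have h1 : (univ.filter (fun p : Fin n × Fin n => p.1 < p.2 ∧ w p.1 < w p.2))
        = (univ.filter (fun p : Fin n × Fin n => p.1 < p.2)).filter
            (fun p => w p.1 < w p.2) := by
      rw [Finset.filter_filter]
    have h2 : (univ.filter (fun p : Fin n × Fin n => p.1 < p.2 ∧ w p.2 < w p.1))
        = (univ.filter (fun p : Fin n × Fin n => p.1 < p.2)).filter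
            (fun p => ¬ w p.1 < w p.2) := by
      rw [Finset.filter_filter]
      apply Finset.filter_congr
      intro p _
      constructor
      · rintro ⟨h, h'⟩; exact ⟨h, not_lt.mpr h'.le⟩
      · rintro ⟨h, h'⟩
        refine ⟨h, lt_of_le_of_ne (not_lt.mp h') ?_⟩
        intro he
        exact absurd (w.injective he) (ne_of_lt h).symm
    rw [h1, h2, Finset.card_filter_add_card_filter_not]
  have htotal : (univ.filter (fun p : Fin n × Fin n => p.1 < p.2)).card
      = n * (n - 1) / 2 := by
    rw [Finset.card_filter]
    rw [Fintype.sum_prod_type_right]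
    have : ∀ y : Fin n, (∑ x : Fin n, if x < y then (1:ℕ) else 0) = (y : ℕ) := by
      intro y
      rw [← Finset.card_filter]
      have : (univ.filter (fun x : Fin n => x < y)) = Finset.Iio y := by
        ext x; simp
      rw [this, Fin.card_Iio]
    rw [Finset.sum_congr rfl (fun y _ => this y)]
    rw [Fin.sum_univ_eq_sum_range (fun k => k) n]
    rw [Finset.sum_range_id]
  omega

lemma nu_mul_rev (n : ℕ) (w : Equiv.Perm (Fin n)) (i : ℕ) (hi : i ∈ Finset.Icc 1 (n - 1))
    (hn : 2 ≤ n) :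
    nu n (w * Fin.revPerm) i = 1 - nu n w i := by
  simp only [Finset.mem_Icc] at hi
  have h : 1 ≤ i ∧ i + 1 ≤ n := ⟨hi.1, by omega⟩
  unfold nu
  rw [dif_pos h, dif_pos h]
  have key : ∀ a : Fin n, (w * Fin.revPerm).symm a = (w.symm a).rev := fun a => rfl
  simp only [key, Fin.rev_lt_rev]
  have hne : w.symm ⟨i - 1, by omega⟩ ≠ w.symm ⟨i, by omega⟩ := by
    intro he
    have := w.symm.injective he
    have hv : i - 1 = i := congrArg Fin.val this
    omega
  rcases lt_or_gt_of_ne hne with h1 | h1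
  · rw [if_pos h1, if_neg (by exact fun h2 => absurd h1 (not_lt.mpr h2.le))]
  · rw [if_neg (by exact fun h2 => absurd h1 (not_lt.mpr h2.le)), if_pos h1]

lemma sum_transform (F : Type*) [Field F] (n : ℕ) (hn : 2 ≤ n)
    (q : F) (X : ℕ → F) (hq : q ≠ 0) (hX : ∀ i ∈ Finset.Icc 1 (n - 1), X i ≠ 0) :
    ∑ w : Equiv.Perm (Fin n),
        q ^ (permLength n w) * ∏ i ∈ Finset.Icc 1 (n - 1), (X i)⁻¹ ^ (nu n w i)
      = q ^ (n * (n - 1) / 2) * (∏ i ∈ Finset.Icc 1 (n - 1), X i)⁻¹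
        * ∑ w : Equiv.Perm (Fin n),
            q⁻¹ ^ (permLength n w) * ∏ i ∈ Finset.Icc 1 (n - 1), (X i) ^ (nu n w i) := by
  rw [Finset.mul_sum]
  apply Fintype.sum_equiv (Equiv.mulRight Fin.revPerm)
  intro w
  simp only [Equiv.coe_mulRight]
  have hL := permLength_mul_rev n w
  have hq2 : q ^ permLength n w
      = q ^ (n * (n - 1) / 2) * q⁻¹ ^ permLength n (w * Fin.revPerm) := by
    rw [inv_pow]
    field_simp
    rw [← pow_add, Nat.add_comm, hL]
  have hprod : ∏ i ∈ Finset.Icc 1 (n - 1), (X i)⁻¹ ^ (nu n w i)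
      = (∏ i ∈ Finset.Icc 1 (n - 1), X i)⁻¹
        * ∏ i ∈ Finset.Icc 1 (n - 1), (X i) ^ (nu n (w * Fin.revPerm) i) := by
    rw [← Finset.prod_inv_distrib, ← Finset.prod_mul_distrib]
    apply Finset.prod_congr rfl
    intro i hi
    rw [nu_mul_rev n w i hi hn]
    have h1 := nu_le_one n w i
    have hXi := hX i hi
    interval_cases h : nu n w i
    · simp [inv_mul_cancel₀ hXi]
    · simp
  rw [hq2, hprod]
  ring

/-- Functional-equation symmetry: substituting `q → q⁻¹`, `X_i → X_i⁻¹`, `X̃_0 → X̃_0⁻¹`,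
`X̃_n → X̃_n⁻¹` in `Z` yields `(−1)^{n−1}·q^{n(n−1)/2}·X̃_0·X̃_n·Z`. -/
theorem stmt_8 (F : Type*) [Field F] (n : ℕ) (hn : 2 ≤ n)
    (q : F) (X : ℕ → F) (X0 Xn : F)
    (hq : q ≠ 0) (hX : ∀ i ∈ Finset.Icc 1 (n - 1), X i ≠ 0) (hX0 : X0 ≠ 0) (hXn : Xn ≠ 0)
    (hX1 : ∀ i ∈ Finset.Icc 1 (n - 1), X i ≠ 1) (hX01 : X0 ≠ 1) (hXn1 : Xn ≠ 1) :
    igusaZ F n q⁻¹ (fun i => (X i)⁻¹) X0⁻¹ Xn⁻¹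
      = (-1) ^ (n - 1) * q ^ (n * (n - 1) / 2) * X0 * Xn * igusaZ F n q X X0 Xn := by
  unfold igusaZ
  simp only [inv_inv]
  rw [sum_transform F n hn q X hq hX]
  have hden : ∏ i ∈ Finset.Icc 1 (n - 1), (1 - (X i)⁻¹)
      = (-1) ^ (n - 1) * (∏ i ∈ Finset.Icc 1 (n - 1), (1 - X i))
        * (∏ i ∈ Finset.Icc 1 (n - 1), X i)⁻¹ := by
    have hcard : (Finset.Icc 1 (n - 1)).card = n - 1 := by
      rw [Nat.card_Icc]; omega
    have step : ∏ i ∈ Finset.Icc 1 (n - 1), (1 - (X i)⁻¹)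
        = ∏ i ∈ Finset.Icc 1 (n - 1), ((-1) * (1 - X i) * (X i)⁻¹) := by
      apply Finset.prod_congr rfl
      intro i hi
      have hXi := hX i hi
      field_simp
      ring
    rw [step, Finset.prod_mul_distrib, Finset.prod_mul_distrib, Finset.prod_const,
      hcard, Finset.prod_inv_distrib]
  have hPne : (∏ i ∈ Finset.Icc 1 (n - 1), X i) ≠ 0 := Finset.prod_ne_zero_iff.mpr hX
  have hDne : (∏ i ∈ Finset.Icc 1 (n - 1), (1 - X i)) ≠ 0 :=
    Finset.prod_ne_zero_iff.mpr (fun i hi => sub_ne_zero.mpr (fun he => hX1 i hi he.symm))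
  have h0 : (1 : F) - X0 ≠ 0 := sub_ne_zero.mpr (fun he => hX01 he.symm)
  have h1 : (1 : F) - Xn ≠ 0 := sub_ne_zero.mpr (fun he => hXn1 he.symm)
  have e0 : (1 : F) - X0⁻¹ = -(1 - X0) * X0⁻¹ := by field_simp; ring
  have e1 : (1 : F) - Xn⁻¹ = -(1 - Xn) * Xn⁻¹ := by field_simp; ring
  have hDen : (∏ i ∈ Finset.Icc 1 (n - 1), (1 - (X i)⁻¹)) * ((1 - X0⁻¹) * (1 - Xn⁻¹))
      = (-1) ^ (n - 1)
        * ((∏ i ∈ Finset.Icc 1 (n - 1), X i) * X0 * Xn)⁻¹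
        * ((∏ i ∈ Finset.Icc 1 (n - 1), (1 - X i)) * ((1 - X0) * (1 - Xn))) := by
    rw [hden, e0, e1, mul_inv, mul_inv]
    ring
  rw [hDen]
  set S := ∑ w : Equiv.Perm (Fin n),
      q⁻¹ ^ (permLength n w) * ∏ i ∈ Finset.Icc 1 (n - 1), (X i) ^ (nu n w i) with hS
  set P := ∏ i ∈ Finset.Icc 1 (n - 1), X i with hP
  set D := ∏ i ∈ Finset.Icc 1 (n - 1), (1 - X i) with hD
  have hd : D * ((1 - X0) * (1 - Xn)) ≠ 0 := mul_ne_zero hDne (mul_ne_zero h0 h1)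
  have hPXne : P * X0 * Xn ≠ 0 := mul_ne_zero (mul_ne_zero hPne hX0) hXn
  rcases Nat.even_or_odd (n - 1) with hpar | hpar
  · rw [Even.neg_one_pow hpar, ← mul_div_assoc,
      div_eq_div_iff
        (mul_ne_zero (mul_ne_zero one_ne_zero (inv_ne_zero hPXne)) hd) hd]
    field_simp
  · rw [Odd.neg_one_pow hpar, ← mul_div_assoc,
      div_eq_div_iff
        (mul_ne_zero (mul_ne_zero (neg_ne_zero.mpr one_ne_zero) (inv_ne_zero hPXne)) hd) hd]
    field_simp
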